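/- Define Y(s) = C e^{±(2√2/ρ)s} with C > 0 and τ(s) = ±(6√2/ρ)·√(Y(s))·|Y(s) - 1|/(Y(s)² + 6Y(s) + 1). Then τ satisfies the ODE ρ⁴τ'²/(9 - 4ρ²τ²) = 1/2 + ρ²τ²/9 ∓ (1/6)√(9 - 4ρ²τ²) (the constant-curvature cylinder equation with κ₀ = 1/ρ). -/

import Mathlib

set_option maxHeartbeats 1000000

private lemma hasDerivAt_F (Y : ℝ → ℝ) (a s : ℝ) (hYd : HasDerivAt Y (a * Y s) s)
    (hpos : 0 < Y s) :
    HasDerivAt (fun t => Real.sqrt (Y t) * (Y t - 1) / ((Y t) ^ 2 + 6 * Y t + 1))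
      (-(a * Real.sqrt (Y s) * (Y s + 1) * ((Y s) ^ 2 - 10 * Y s + 1)) /
        (2 * ((Y s) ^ 2 + 6 * Y s + 1) ^ 2)) s := by
  have hne : Y s ≠ 0 := ne_of_gt hpos
  have hsq : Real.sqrt (Y s) ^ 2 = Y s := Real.sq_sqrt hpos.le
  have hsqpos : 0 < Real.sqrt (Y s) := Real.sqrt_pos.mpr hpos
  have hQpos : 0 < (Y s) ^ 2 + 6 * Y s + 1 := by positivity
  have hN : HasDerivAt (fun t => Real.sqrt (Y t) * (Y t - 1))
      ((a * Y s / (2 * Real.sqrt (Y s))) * (Y s - 1) + Real.sqrt (Y s) * (a * Y s)) s :=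
    (hYd.sqrt hne).mul (hYd.sub_const 1)
  have hQ : HasDerivAt (fun t => (Y t) ^ 2 + 6 * Y t + 1)
      ((2 : ℕ) * Y s ^ (2 - 1) * (a * Y s) + 6 * (a * Y s)) s :=
    ((hYd.pow 2).add (hYd.const_mul 6)).add_const 1
  have h := hN.div hQ (ne_of_gt hQpos)
  refine h.congr_deriv ?_
  symm
  generalize hu : Real.sqrt (Y s) = u at *
  have h2 : Y s = u ^ 2 := hsq.symm
  rw [h2]
  have hune : u ≠ 0 := ne_of_gt hsqpos
  rw [div_eq_div_iff (by positivity) (by positivity)]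
  field_simp
  ring

theorem stmt_13 (ρ C ε₁ ε₂ : ℝ) (hρ : 0 < ρ) (hC : 0 < C)
    (hε₁ : ε₁ = 1 ∨ ε₁ = -1) (hε₂ : ε₂ = 1 ∨ ε₂ = -1)
    (Y τ : ℝ → ℝ)
    (hY : ∀ s, Y s = C * Real.exp (ε₁ * (2 * Real.sqrt 2 / ρ) * s))
    (hτ : ∀ s, τ s = ε₂ * (6 * Real.sqrt 2 / ρ) * Real.sqrt (Y s) * |Y s - 1| /
      ((Y s) ^ 2 + 6 * Y s + 1)) :
    ∀ s : ℝ, 4 * ρ ^ 2 * (τ s) ^ 2 < 9 →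
      ∃ δ : ℝ, (δ = 1 ∨ δ = -1) ∧
        ρ ^ 4 * (deriv τ s) ^ 2 / (9 - 4 * ρ ^ 2 * (τ s) ^ 2) =
          1 / 2 + ρ ^ 2 * (τ s) ^ 2 / 9 +
            δ * (1 / 6) * Real.sqrt (9 - 4 * ρ ^ 2 * (τ s) ^ 2) := by
  have h2 : Real.sqrt 2 ^ 2 = 2 := Real.sq_sqrt (by norm_num)
  have h2pos : (0:ℝ) < Real.sqrt 2 := Real.sqrt_pos.mpr (by norm_num)
  have hρne : ρ ≠ 0 := ne_of_gt hρ
  have hε₁sq : ε₁ ^ 2 = 1 := by rcases hε₁ with h|h <;> rw [h] <;> norm_num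
  have hε₂sq : ε₂ ^ 2 = 1 := by rcases hε₂ with h|h <;> rw [h] <;> norm_num
  have hε₁ne : ε₁ ≠ 0 := by rcases hε₁ with h|h <;> rw [h] <;> norm_num
  have hε₂ne : ε₂ ≠ 0 := by rcases hε₂ with h|h <;> rw [h] <;> norm_num
  set a : ℝ := ε₁ * (2 * Real.sqrt 2 / ρ) with ha
  set k : ℝ := ε₂ * (6 * Real.sqrt 2 / ρ) with hk
  have hane : a ≠ 0 := by rw [ha]; exact mul_ne_zero hε₁ne (by positivity)
  have hkne : k ≠ 0 := by rw [hk]; exact mul_ne_zero hε₂ne (by positivity)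
  have ha2 : a ^ 2 = 8 / ρ ^ 2 := by
    rw [ha, mul_pow, div_pow, mul_pow, h2, hε₁sq]; norm_num
  have hk2 : k ^ 2 = 72 / ρ ^ 2 := by
    rw [hk, mul_pow, div_pow, mul_pow, h2, hε₂sq]; norm_num
  have hYpos : ∀ t, 0 < Y t := fun t => by rw [hY]; positivity
  have hYd : ∀ t, HasDerivAt Y (a * Y t) t := by
    intro t
    have h1 : HasDerivAt (fun u : ℝ => a * u) a t := by
      simpa using (hasDerivAt_id t).const_mul a
    have h3 := (Real.hasDerivAt_exp (a * t)).comp t h1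
    have h4 := h3.const_mul C
    have heq : Y = fun u => C * Real.exp (a * u) := by funext u; rw [hY]
    rw [heq]
    refine h4.congr_deriv ?_
    symm
    simp
    ring
  have hYc : Continuous Y := by
    have heq : Y = fun u => C * Real.exp (a * u) := by funext u; rw [hY]
    rw [heq]; continuity
  intro s hs
  have hypos : 0 < Y s := hYpos s
  have hsqy : Real.sqrt (Y s) ^ 2 = Y s := Real.sq_sqrt hypos.le
  have hQpos : (0:ℝ) < (Y s) ^ 2 + 6 * Y s + 1 := by positivity
  have hQne : ((Y s) ^ 2 + 6 * Y s + 1) ≠ 0 := ne_of_gt hQpos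
  -- squared value of τ s
  have hτ2 : (τ s) ^ 2 = 72 / ρ ^ 2 * Y s * (Y s - 1) ^ 2 / ((Y s) ^ 2 + 6 * Y s + 1) ^ 2 := by
    rw [hτ s, div_pow, mul_pow, mul_pow, hk2, hsqy, sq_abs]
  -- key identity : 9 - 4 ρ² τ² = 9 P² / Q²
  have hkey : 9 - 4 * ρ ^ 2 * (τ s) ^ 2 =
      9 * ((Y s) ^ 2 - 10 * Y s + 1) ^ 2 / ((Y s) ^ 2 + 6 * Y s + 1) ^ 2 := by
    rw [hτ2]; field_simp; ring
  have hpos9 : (0:ℝ) <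
      9 * ((Y s) ^ 2 - 10 * Y s + 1) ^ 2 / ((Y s) ^ 2 + 6 * Y s + 1) ^ 2 := by
    rw [← hkey]; linarith
  have hPne : (Y s) ^ 2 - 10 * Y s + 1 ≠ 0 := by
    intro h0; rw [h0] at hpos9; norm_num at hpos9
  have hsqrt9 : Real.sqrt (9 - 4 * ρ ^ 2 * (τ s) ^ 2) =
      3 * |(Y s) ^ 2 - 10 * Y s + 1| / ((Y s) ^ 2 + 6 * Y s + 1) := by
    rw [hkey, show 9 * ((Y s) ^ 2 - 10 * Y s + 1) ^ 2 / ((Y s) ^ 2 + 6 * Y s + 1) ^ 2 =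
        (3 * |(Y s) ^ 2 - 10 * Y s + 1| / ((Y s) ^ 2 + 6 * Y s + 1)) ^ 2 by
      rw [div_pow, mul_pow, sq_abs]; norm_num]
    exact Real.sqrt_sq (by positivity)
  have hF := hasDerivAt_F Y a s (hYd s) hypos
  by_cases hY1 : Y s = 1
  · -- kink point : τ s = 0 and τ is not differentiable at s, so deriv τ s = 0
    have hτ0 : τ s = 0 := by rw [hτ s, hY1]; simp
    have hCe : C * Real.exp (a * s) = 1 := by rw [← hY s, hY1]
    have hYt : ∀ t, Y t = Real.exp (a * (t - s)) := by
      intro t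
      rw [hY t, show a * t = a * s + a * (t - s) by ring, Real.exp_add, ← mul_assoc, hCe,
        one_mul]
    have hsignR : ∀ t, s ≤ t → |Y t - 1| = ε₁ * (Y t - 1) := by
      intro t ht
      rcases hε₁ with h|h <;> rw [h]
      · rw [one_mul, abs_of_nonneg]
        rw [hYt t]
        have h0 : (0:ℝ) ≤ a * (t - s) := by
          rw [ha, h, one_mul]; exact mul_nonneg (by positivity) (by linarith)
        have := Real.one_le_exp h0
        linarith
      · rw [abs_of_nonpos, neg_one_mul]
        rw [hYt t]
        have h0 : a * (t - s) ≤ 0 := by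
          rw [ha, h]
          have h1 : (0:ℝ) ≤ (2 * Real.sqrt 2 / ρ) * (t - s) :=
            mul_nonneg (by positivity) (by linarith)
          nlinarith [h1]
        have := Real.exp_le_one_iff.mpr h0
        linarith
    have hsignL : ∀ t, t ≤ s → |Y t - 1| = -ε₁ * (Y t - 1) := by
      intro t ht
      rcases hε₁ with h|h <;> rw [h]
      · rw [abs_of_nonpos, neg_one_mul]
        rw [hYt t]
        have h0 : a * (t - s) ≤ 0 := by
          rw [ha, h, one_mul]
          have h1 : (0:ℝ) ≤ (2 * Real.sqrt 2 / ρ) * (s - t) :=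
            mul_nonneg (by positivity) (by linarith)
          nlinarith [h1]
        have := Real.exp_le_one_iff.mpr h0
        linarith
      · rw [neg_neg, one_mul, abs_of_nonneg]
        rw [hYt t]
        have h0 : (0:ℝ) ≤ a * (t - s) := by
          rw [ha, h]
          have h1 : (0:ℝ) ≤ (2 * Real.sqrt 2 / ρ) * (s - t) :=
            mul_nonneg (by positivity) (by linarith)
          nlinarith [h1]
        have := Real.one_le_exp h0
        linarith
    have hDne : (-(a * Real.sqrt (Y s) * (Y s + 1) * ((Y s) ^ 2 - 10 * Y s + 1)) /
        (2 * ((Y s) ^ 2 + 6 * Y s + 1) ^ 2)) ≠ 0 := by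
      apply div_ne_zero
      · apply neg_ne_zero.mpr
        apply mul_ne_zero
        apply mul_ne_zero
        apply mul_ne_zero hane
        · exact ne_of_gt (Real.sqrt_pos.mpr hypos)
        · positivity
        · exact hPne
      · positivity
    have hRd : HasDerivWithinAt τ
        ((k * ε₁) * (-(a * Real.sqrt (Y s) * (Y s + 1) * ((Y s) ^ 2 - 10 * Y s + 1)) /
          (2 * ((Y s) ^ 2 + 6 * Y s + 1) ^ 2))) (Set.Ici s) s := by
      refine ((hF.const_mul (k * ε₁)).hasDerivWithinAt).congr ?_ ?_
      · intro t ht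
        rw [hτ t, hsignR t ht]
        ring
      · rw [hτ s, hsignR s le_rfl]
        ring
    have hLd : HasDerivWithinAt τ
        (-((k * ε₁) * (-(a * Real.sqrt (Y s) * (Y s + 1) * ((Y s) ^ 2 - 10 * Y s + 1)) /
          (2 * ((Y s) ^ 2 + 6 * Y s + 1) ^ 2)))) (Set.Iic s) s := by
      have h1 := ((hF.const_mul (-(k * ε₁))).hasDerivWithinAt (s := Set.Iic s))
      rw [neg_mul] at h1
      refine h1.congr ?_ ?_
      · intro t ht
        rw [hτ t, hsignL t ht]
        ring
      · rw [hτ s, hsignL s le_rfl]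
        ring
    have hcne : (k * ε₁) * (-(a * Real.sqrt (Y s) * (Y s + 1) * ((Y s) ^ 2 - 10 * Y s + 1)) /
        (2 * ((Y s) ^ 2 + 6 * Y s + 1) ^ 2)) ≠ 0 :=
      mul_ne_zero (mul_ne_zero hkne hε₁ne) hDne
    have hnd : ¬ DifferentiableAt ℝ τ s := by
      intro hdiff
      have e1 := hRd.derivWithin (uniqueDiffOn_Ici s s Set.self_mem_Ici)
      have e2 := (hdiff.hasDerivAt.hasDerivWithinAt).derivWithin (uniqueDiffOn_Ici s s Set.self_mem_Ici)
      have e3 := hLd.derivWithin (uniqueDiffOn_Iic s s Set.self_mem_Iic)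
      have e4 := (hdiff.hasDerivAt.hasDerivWithinAt).derivWithin (uniqueDiffOn_Iic s s Set.self_mem_Iic)
      apply hcne
      rw [e2] at e1
      rw [e4] at e3
      linarith [e1, e3]
    have hdτ : deriv τ s = 0 := deriv_zero_of_not_differentiableAt hnd
    refine ⟨-1, Or.inr rfl, ?_⟩
    rw [hdτ, hτ0]
    have h9 : Real.sqrt 9 = 3 := by
      rw [show (9:ℝ) = 3 ^ 2 by norm_num, Real.sqrt_sq (by norm_num)]
    norm_num [h9]
  · -- smooth point : Y s ≠ 1
    have pow_helper : ∀ c x u w p q : ℝ,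
        (c * (-(x * u * w * p) / q)) ^ 2 = c ^ 2 * x ^ 2 * u ^ 2 * w ^ 2 * p ^ 2 / q ^ 2 := by
      intros; ring
    have hder2 : (deriv τ s) ^ 2 = 144 * Y s * (Y s + 1) ^ 2 * ((Y s) ^ 2 - 10 * Y s + 1) ^ 2 /
        (ρ ^ 4 * ((Y s) ^ 2 + 6 * Y s + 1) ^ 4) := by
      rcases lt_or_gt_of_ne hY1 with hlt | hgt
      · have hopen : IsOpen {t | Y t < 1} := isOpen_lt hYc continuous_const
        have hmem : {t | Y t < 1} ∈ nhds s := hopen.mem_nhds hlt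
        have heq : (fun t => -k * (Real.sqrt (Y t) * (Y t - 1) / ((Y t) ^ 2 + 6 * Y t + 1)))
            =ᶠ[nhds s] τ := by
          filter_upwards [hmem] with t ht
          rw [hτ t, abs_of_neg (sub_neg.mpr ht)]
          ring
        have hd := (hF.const_mul (-k)).congr_of_eventuallyEq heq.symm
        rw [hd.deriv]
        rw [pow_helper (-k) a (Real.sqrt (Y s)) (Y s + 1) ((Y s) ^ 2 - 10 * Y s + 1)
          (2 * ((Y s) ^ 2 + 6 * Y s + 1) ^ 2), neg_sq, hk2, ha2, hsqy]
        field_simp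
        ring
      · have hopen : IsOpen {t | 1 < Y t} := isOpen_lt continuous_const hYc
        have hmem : {t | 1 < Y t} ∈ nhds s := hopen.mem_nhds hgt
        have heq : (fun t => k * (Real.sqrt (Y t) * (Y t - 1) / ((Y t) ^ 2 + 6 * Y t + 1)))
            =ᶠ[nhds s] τ := by
          filter_upwards [hmem] with t ht
          rw [hτ t, abs_of_pos (sub_pos.mpr ht)]
          ring
        have hd := (hF.const_mul k).congr_of_eventuallyEq heq.symm
        rw [hd.deriv]
        rw [pow_helper (k) a (Real.sqrt (Y s)) (Y s + 1) ((Y s) ^ 2 - 10 * Y s + 1)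
          (2 * ((Y s) ^ 2 + 6 * Y s + 1) ^ 2), hk2, ha2, hsqy]
        field_simp
        ring
    rcases lt_or_gt_of_ne hPne with hPneg | hPpos
    · refine ⟨1, Or.inl rfl, ?_⟩
      rw [hsqrt9, abs_of_neg hPneg, hkey, hder2, hτ2]
      field_simp
      rw [div_eq_iff (by intro h0; apply hPne; linear_combination h0)]
      ring
    · refine ⟨-1, Or.inr rfl, ?_⟩
      rw [hsqrt9, abs_of_pos hPpos, hkey, hder2, hτ2]
      field_simp
      rw [div_eq_iff (by intro h0; apply hPne; linear_combination h0)]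
      ring
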